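/- arXiv:math/0405011 — 2 statements merged into one kernel-verified Lean document; each statement's English description precedes it below -/
import Mathlib

section
/- Let N ≥ 2 be an integer, let n > 0 be a real number, let p_1, …, p_N be nonnegative integers with p_1 ≤ p_2 + ⋯ + p_N, and let μ_1, …, μ_N be nonnegative real numbers satisfying μ_i ≤ μ_1 for all i and μ_i ≤ μ_2 for all i ≥ 2. If Σ_{i=1}^N p_i μ_i > n·(Σ_{i=1}^N p_i + 1), then μ_1 + μ_2 > 2n. -/
/-- Arithmetic core of Proposition 9: if `N ≥ 2`, `n > 0`,
`p 1, …, p N` are nonnegative integers with `p 1 ≤ p 2 + ⋯ + p N`,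
and `μ 1, …, μ N` are nonnegative reals with `μ i ≤ μ 1` for all `i`
and `μ i ≤ μ 2` for all `i ≥ 2`, then
`∑ p i * μ i > n * (∑ p i + 1)` implies `μ 1 + μ 2 > 2 n`. -/
theorem stmt_0 (N : ℕ) (hN : 2 ≤ N) (n : ℝ) (hn : 0 < n)
    (p : ℕ → ℕ) (μ : ℕ → ℝ)
    (hμnonneg : ∀ i ∈ Finset.Icc 1 N, 0 ≤ μ i)
    (hp1 : p 1 ≤ ∑ i ∈ Finset.Icc 2 N, p i)
    (hμ1 : ∀ i ∈ Finset.Icc 1 N, μ i ≤ μ 1)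
    (hμ2 : ∀ i ∈ Finset.Icc 2 N, μ i ≤ μ 2)
    (hNF : ∑ i ∈ Finset.Icc 1 N, (p i : ℝ) * μ i
            > n * ((∑ i ∈ Finset.Icc 1 N, (p i : ℝ)) + 1)) :
    μ 1 + μ 2 > 2 * n := by
  by_contra hcon
  push_neg at hcon
  have hsplit : Finset.Icc 1 N = insert 1 (Finset.Icc 2 N) := by
    ext x; simp [Finset.mem_Icc]; omega
  have h1not : (1 : ℕ) ∉ Finset.Icc 2 N := by simp
  set Q : ℝ := ∑ i ∈ Finset.Icc 2 N, (p i : ℝ) with hQ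
  have h2mem : (2 : ℕ) ∈ Finset.Icc 2 N := by simp; omega
  have h1mem : (1 : ℕ) ∈ Finset.Icc 1 N := by simp; omega
  have h2mem' : (2 : ℕ) ∈ Finset.Icc 1 N := by simp; omega
  have hμ2n : 0 ≤ μ 2 := hμnonneg 2 h2mem'
  have hμ21 : μ 2 ≤ μ 1 := hμ1 2 h2mem'
  have hμ2le : μ 2 ≤ n := by linarith
  have hpQ : (p 1 : ℝ) ≤ Q := by
    rw [hQ, ← Nat.cast_sum]; exact_mod_cast hp1
  have htail : ∑ i ∈ Finset.Icc 2 N, (p i : ℝ) * μ i ≤ Q * μ 2 := by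
    rw [hQ, Finset.sum_mul]
    apply Finset.sum_le_sum
    intro i hi
    have : μ i ≤ μ 2 := hμ2 i hi
    have hpi : (0 : ℝ) ≤ (p i : ℝ) := Nat.cast_nonneg _
    nlinarith
  rw [hsplit, Finset.sum_insert h1not, Finset.sum_insert h1not] at hNF
  have hμ1b : μ 1 ≤ 2 * n - μ 2 := by linarith
  have hP1 : (0 : ℝ) ≤ (p 1 : ℝ) := Nat.cast_nonneg _
  nlinarith [mul_le_mul_of_nonneg_left hμ1b hP1, mul_le_mul_of_nonneg_left hμ2le (by linarith : (0:ℝ) ≤ Q - (p 1 : ℝ))]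
end

section
/- Let N ≥ 2 and let r be a relation on {1, …, N} such that r(i, j) holds only if j < i. For each i ∈ {1, …, N} let P(N, i) denote the set of finite sequences N = v_0, v_1, …, v_k = i with r(v_t, v_{t+1}) for all 0 ≤ t < k (such sequences are strictly decreasing, so each P(N, i) is a finite set), and set p_i = |P(N, i)| (so p_N = 1). Let n > 0 be a real number and let μ_1 ≥ μ_2 ≥ ⋯ ≥ μ_N ≥ 0 be real numbers. If Σ_{i=1}^N p_i μ_i > n·(Σ_{i=1}^N p_i + 1), then μ_1 + μ_2 > 2n. -/
/-- The set of paths from `a` to `b` along the relation `r`: finite sequences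
`a = v 0, v 1, …, v k = b` with `r (v t) (v (t+1))` for all `0 ≤ t < k`,
encoded as lists with head `a`, last element `b`, whose consecutive entries
are related by `r`. -/
def pathSet (r : ℕ → ℕ → Prop) (a b : ℕ) : Set (List ℕ) :=
  {l | l.Chain' r ∧ l.head? = some a ∧ l.getLast? = some b}

lemma pathSet_sorted {r : ℕ → ℕ → Prop} (hlt : ∀ i j, r i j → j < i) {a b : ℕ}
    {l : List ℕ} (hl : l ∈ pathSet r a b) : l.Pairwise (· > ·) := by
  have h := hl.1.imp (fun {x y} h => hlt _ _ h)
  exact List.isChain_iff_pairwise.mp h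

lemma pathSet_le {r : ℕ → ℕ → Prop} (hlt : ∀ i j, r i j → j < i) {a b : ℕ}
    {l : List ℕ} (hl : l ∈ pathSet r a b) : ∀ x ∈ l, x ≤ a := by
  have hs := pathSet_sorted hlt hl
  obtain ⟨hc, hh, -⟩ := hl
  cases l with
  | nil => simp at hh
  | cons y t =>
    simp only [List.head?_cons, Option.some.injEq] at hh
    subst hh
    intro x hx
    rcases List.mem_cons.mp hx with h | h
    · omega
    · exact le_of_lt (List.rel_of_pairwise_cons hs h)

lemma pathSet_finite (r : ℕ → ℕ → Prop) (hlt : ∀ i j, r i j → j < i) (a b : ℕ) :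
    (pathSet r a b).Finite := by
  apply Set.Finite.of_finite_image (f := List.toFinset)
  · apply Set.Finite.subset (Set.finite_Icc (∅ : Finset ℕ) (Finset.Icc 0 a))
    rintro s ⟨l, hl, rfl⟩
    simp only [Set.mem_Icc, Finset.le_iff_subset]
    refine ⟨Finset.empty_subset _, fun x hx => ?_⟩
    simp only [List.mem_toFinset] at hx
    exact Finset.mem_Icc.mpr ⟨Nat.zero_le _, pathSet_le hlt hl x hx⟩
  · intro l₁ h₁ l₂ h₂ he
    have hs₁ := pathSet_sorted hlt h₁
    have hs₂ := pathSet_sorted hlt h₂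
    exact List.Perm.eq_of_pairwise (fun _ _ _ _ h1 h2 => absurd h1 (lt_asymm h2)) hs₁ hs₂
      (List.perm_of_nodup_nodup_toFinset_eq hs₁.nodup hs₂.nodup he)

/-- Counting: every path from `N` to `1` has a strict prefix which is a path from `N`
to some `j ∈ [2, N]`, and this assignment is injective. -/
lemma card_path_one_le {N : ℕ} (hN : 2 ≤ N) {r : ℕ → ℕ → Prop}
    (hdom : ∀ i j, r i j → i ∈ Finset.Icc 1 N ∧ j ∈ Finset.Icc 1 N)
    (hlt : ∀ i j, r i j → j < i) :
    Nat.card (pathSet r N 1) ≤ ∑ i ∈ Finset.Icc 2 N, Nat.card (pathSet r N i) := by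
  classical
  have hfin : ∀ b, (pathSet r N b).Finite := pathSet_finite r hlt N
  let F : ℕ → Finset (List ℕ) := fun b => (hfin b).toFinset
  have hcard : ∀ b, Nat.card (pathSet r N b) = (F b).card := by
    intro b
    rw [Nat.card_eq_card_finite_toFinset (hfin b)]
  rw [hcard]
  simp only [hcard]
  have key : (F 1).card ≤ ((Finset.Icc 2 N).biUnion F).card := by
    apply Finset.card_le_card_of_injOn (fun l => l.dropLast)
    · intro l hl
      simp only [F, Finset.mem_coe, Set.Finite.mem_toFinset] at hl
      obtain ⟨hc, hh, hg⟩ := hl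
      -- l has length ≥ 2
      have hne : l ≠ [] := by rintro rfl; simp at hh
      have hlen : 2 ≤ l.length := by
        match l, hne with
        | [x], _ =>
          simp only [List.head?_cons, Option.some.injEq] at hh
          simp only [List.getLast?_singleton, Option.some.injEq] at hg
          omega
        | (x :: y :: t), _ => simp
      have hdne : l.dropLast ≠ [] := by
        have : l.dropLast.length = l.length - 1 := List.length_dropLast
        intro h; rw [h] at this; simp at this; omega
      have hsplit : l.dropLast ++ [1] = l := List.dropLast_append_getLast? 1 hg
      -- chain on prefix, and relation between last of prefix and 1
      rw [← hsplit] at hc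
      unfold List.Chain' at hc
      rw [List.isChain_append] at hc
      obtain ⟨hc1, -, hrel⟩ := hc
      set j := l.dropLast.getLast hdne with hj
      have hjmem : l.dropLast.getLast? = some j := List.getLast?_eq_getLast hdne
      have hrj : r j 1 := hrel j hjmem 1 rfl
      have hj2 : j ∈ Finset.Icc 2 N := by
        have h1 := (hdom _ _ hrj).1
        have h2 := hlt _ _ hrj
        simp only [Finset.mem_Icc] at h1 ⊢
        omega
      apply Finset.mem_biUnion.mpr
      refine ⟨j, hj2, ?_⟩
      simp only [F, Set.Finite.mem_toFinset]
      refine ⟨hc1, ?_, ?_⟩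
      · rw [← hsplit] at hh
        rwa [List.head?_append_of_ne_nil _ hdne] at hh
      · rw [List.getLast?_eq_getLast hdne]
    · intro l₁ h₁ l₂ h₂ he
      simp only [F, Finset.mem_coe, Set.Finite.mem_toFinset] at h₁ h₂
      have e₁ : l₁.dropLast ++ [1] = l₁ := List.dropLast_append_getLast? 1 h₁.2.2
      have e₂ : l₂.dropLast ++ [1] = l₂ := List.dropLast_append_getLast? 1 h₂.2.2
      calc l₁ = l₁.dropLast ++ [1] := e₁.symm
        _ = l₂.dropLast ++ [1] := by rw [show l₁.dropLast = l₂.dropLast from he]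
        _ = l₂ := e₂
  exact key.trans (Finset.card_biUnion_le)

/-- Proposition 9 in graph-combinatorial form: for a relation `r` on `{1, …, N}`
holding only when the second argument is smaller, `p i = |P(N, i)|` the number of
paths from `N` to `i`, `n > 0`, and `μ 1 ≥ μ 2 ≥ ⋯ ≥ μ N ≥ 0`, the log
Noether–Fano inequality `∑ p i * μ i > n * (∑ p i + 1)` implies `μ 1 + μ 2 > 2 n`. -/
theorem stmt_1 (N : ℕ) (hN : 2 ≤ N) (r : ℕ → ℕ → Prop)
    (hdom : ∀ i j, r i j → i ∈ Finset.Icc 1 N ∧ j ∈ Finset.Icc 1 N)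
    (hlt : ∀ i j, r i j → j < i)
    (n : ℝ) (hn : 0 < n) (μ : ℕ → ℝ)
    (hmono : ∀ i j, 1 ≤ i → i ≤ j → j ≤ N → μ j ≤ μ i)
    (hμN : 0 ≤ μ N)
    (hNF : ∑ i ∈ Finset.Icc 1 N, (Nat.card (pathSet r N i) : ℝ) * μ i
            > n * ((∑ i ∈ Finset.Icc 1 N, (Nat.card (pathSet r N i) : ℝ)) + 1)) :
    μ 1 + μ 2 > 2 * n := by
  by_contra hcon
  push_neg at hcon
  set p : ℕ → ℝ := fun i => (Nat.card (pathSet r N i) : ℝ) with hp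
  have hp0 : ∀ i, 0 ≤ p i := fun i => Nat.cast_nonneg _
  -- split off i = 1
  have hsplit : Finset.Icc 1 N = insert 1 (Finset.Icc 2 N) := by
    ext x; simp only [Finset.mem_Icc, Finset.mem_insert]; omega
  have hnotmem : (1 : ℕ) ∉ Finset.Icc 2 N := by simp
  rw [hsplit, Finset.sum_insert hnotmem, Finset.sum_insert hnotmem] at hNF
  -- bound the tail sum
  have hμ2 : ∀ i ∈ Finset.Icc 2 N, μ i ≤ μ 2 := by
    intro i hi
    simp only [Finset.mem_Icc] at hi
    exact hmono 2 i (by omega) hi.1 hi.2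
  have htail : ∑ i ∈ Finset.Icc 2 N, p i * μ i ≤ (∑ i ∈ Finset.Icc 2 N, p i) * μ 2 := by
    rw [Finset.sum_mul]
    apply Finset.sum_le_sum
    intro i hi
    exact mul_le_mul_of_nonneg_left (hμ2 i hi) (hp0 i)
  -- counting inequality: p 1 ≤ ∑_{i=2}^N p i
  have hcount : p 1 ≤ ∑ i ∈ Finset.Icc 2 N, p i := by
    have := card_path_one_le hN hdom hlt
    calc p 1 = ((Nat.card (pathSet r N 1) : ℕ) : ℝ) := rfl
      _ ≤ ((∑ i ∈ Finset.Icc 2 N, Nat.card (pathSet r N i) : ℕ) : ℝ) := by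
          exact_mod_cast this
      _ = ∑ i ∈ Finset.Icc 2 N, p i := by push_cast; rfl
  -- basic μ facts
  have hμ21 : μ 2 ≤ μ 1 := hmono 1 2 le_rfl (by omega) hN
  have hμ2N : μ N ≤ μ 2 := hmono 2 N (by omega) hN le_rfl
  have hμ2pos : 0 ≤ μ 2 := le_trans hμN hμ2N
  have hμ2n : μ 2 ≤ n := by linarith
  set S := ∑ i ∈ Finset.Icc 2 N, p i with hS
  have hS0 : 0 ≤ S := Finset.sum_nonneg fun i _ => hp0 i
  nlinarith [mul_le_mul_of_nonneg_left hcon (hp0 1), mul_le_mul_of_nonneg_left hμ2n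
    (sub_nonneg.mpr hcount)]
end
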